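/- arXiv:2004.01744 — 2 statements merged into one kernel-verified Lean document; each statement's English description precedes it below -/
import Mathlib

section
/- The function c_k(τ) = τ^{k/2−1} / ((2π)^{k/2} · J_{k/2−1}(τ)), where J_q is the modified Bessel function of the first kind of order q, is strictly decreasing in τ > 0; indeed its derivative satisfies c_k'(τ) = −(J_{k/2}(τ)/J_{k/2−1}(τ)) · c_k(τ) < 0. -/
open Real Set

/-- The modified Bessel function of the first kind of (real) order `q`,
`I_q(τ) = ∑_{m} (τ/2)^{2m+q} / (m! Γ(m+q+1))`. -/
noncomputable def besselI (q τ : ℝ) : ℝ :=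
  ∑' m : ℕ, (τ / 2) ^ (2 * m) * (τ / 2) ^ q /
    ((Nat.factorial m : ℝ) * Real.Gamma ((m : ℝ) + q + 1))

/-- The normalizing constant of the Von Mises–Fisher distribution,
`c_k(τ) = τ^{k/2−1} / ((2π)^{k/2} I_{k/2−1}(τ))`. -/
noncomputable def vmfConst (k : ℕ) (τ : ℝ) : ℝ :=
  τ ^ ((k : ℝ) / 2 - 1) / ((2 * π) ^ ((k : ℝ) / 2) * besselI ((k : ℝ) / 2 - 1) τ)

noncomputable def bTerm (q : ℝ) (m : ℕ) (τ : ℝ) : ℝ :=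
  (τ / 2) ^ (2 * m) * (τ / 2) ^ q /
    ((Nat.factorial m : ℝ) * Real.Gamma ((m : ℝ) + q + 1))

noncomputable def bTerm' (q : ℝ) (m : ℕ) (τ : ℝ) : ℝ :=
  ((2 * m : ℝ) + q) / τ * bTerm q m τ

lemma vmf_gamma_pos {q : ℝ} (hq : -(1/2) ≤ q) (m : ℕ) :
    0 < Real.Gamma ((m : ℝ) + q + 1) := by
  apply Real.Gamma_pos_of_pos
  have : (0:ℝ) ≤ (m:ℝ) := Nat.cast_nonneg m
  linarith

lemma vmf_gamma_lb {q : ℝ} (hq : -(1/2) ≤ q) (m : ℕ) :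
    Real.Gamma (q + 1) * (1/2) ^ m ≤ Real.Gamma ((m : ℝ) + q + 1) := by
  induction m with
  | zero => simp
  | succ n ih =>
    have hn : (0:ℝ) ≤ (n:ℝ) := Nat.cast_nonneg n
    have hpos : 0 < (n:ℝ) + q + 1 := by linarith
    have h1 : ((n+1 : ℕ) : ℝ) + q + 1 = ((n:ℝ) + q + 1) + 1 := by push_cast; ring
    rw [h1, Real.Gamma_add_one hpos.ne']
    have hG : 0 < Real.Gamma ((n:ℝ) + q + 1) := vmf_gamma_pos hq n
    have hhalf : (1/2 : ℝ) ≤ (n:ℝ) + q + 1 := by linarith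
    calc Real.Gamma (q+1) * (1/2)^(n+1)
        = (1/2) * (Real.Gamma (q+1) * (1/2)^n) := by ring
      _ ≤ (1/2) * Real.Gamma ((n:ℝ) + q + 1) := by linarith
      _ ≤ ((n:ℝ) + q + 1) * Real.Gamma ((n:ℝ)+q+1) := by nlinarith

lemma bTerm_nonneg {q : ℝ} (hq : -(1/2) ≤ q) (m : ℕ) {τ : ℝ} (hτ : 0 < τ) :
    0 ≤ bTerm q m τ := by
  have h2 : (0:ℝ) < τ/2 := by linarith
  have := vmf_gamma_pos hq m
  have h3 : (0:ℝ) < (Nat.factorial m : ℝ) := by positivity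
  unfold bTerm
  positivity

lemma bTerm_le {q : ℝ} (hq : -(1/2) ≤ q) (m : ℕ) {τ : ℝ} (hτ : 0 < τ) :
    bTerm q m τ ≤ ((τ/2) ^ q / Real.Gamma (q+1)) * ((τ^2/2) ^ m / m.factorial) := by
  have h2 : (0:ℝ) < τ/2 := by linarith
  have hGq : 0 < Real.Gamma (q+1) := by
    apply Real.Gamma_pos_of_pos; linarith
  have hG := vmf_gamma_pos hq m
  have hGl := vmf_gamma_lb hq m
  have hf : (0:ℝ) < (Nat.factorial m : ℝ) := by positivity
  have hrw : ((τ/2) ^ q / Real.Gamma (q+1)) * ((τ^2/2) ^ m / m.factorial)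
      = (τ/2) ^ (2*m) * (τ/2) ^ q /
        ((Nat.factorial m : ℝ) * (Real.Gamma (q+1) * (1/2)^m)) := by
    rw [pow_mul]
    have : ((τ/2)^2 : ℝ) = τ^2/4 := by ring
    rw [this]
    have h4 : ((τ^2/2 : ℝ))^m = (τ^2/4)^m * 2^m := by
      rw [← mul_pow]; ring_nf
    rw [h4]
    have h5 : ((1/2 : ℝ))^m = 1/2^m := by rw [div_pow]; norm_num
    rw [h5]
    field_simp
  rw [hrw]
  unfold bTerm
  apply div_le_div_of_nonneg_left
  · positivity
  · positivity
  · exact mul_le_mul_of_nonneg_left hGl hf.le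

lemma summable_bTerm {q : ℝ} (hq : -(1/2) ≤ q) {τ : ℝ} (hτ : 0 < τ) :
    Summable (fun m => bTerm q m τ) := by
  apply Summable.of_nonneg_of_le (fun m => bTerm_nonneg hq m hτ) (fun m => bTerm_le hq m hτ)
  exact (Real.summable_pow_div_factorial (τ^2/2)).mul_left _

lemma bTerm_rpow {q : ℝ} (m : ℕ) {x : ℝ} (hx : 0 < x) :
    bTerm q m x = (x/2) ^ ((2*m : ℝ) + q) / ((Nat.factorial m : ℝ) * Real.Gamma ((m:ℝ)+q+1)) := by
  have h2 : (0:ℝ) < x/2 := by linarith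
  unfold bTerm
  rw [show ((2*m : ℝ)) = ((2*m : ℕ) : ℝ) by push_cast; ring,
    Real.rpow_add h2, Real.rpow_natCast]

lemma hasDerivAt_bTerm {q : ℝ} (m : ℕ) {τ : ℝ} (hτ : 0 < τ) :
    HasDerivAt (bTerm q m) (bTerm' q m τ) τ := by
  have h2 : (0:ℝ) < τ/2 := by linarith
  set r : ℝ := (2*m : ℝ) + q with hr
  set D : ℝ := (Nat.factorial m : ℝ) * Real.Gamma ((m:ℝ)+q+1) with hD
  have hdiv : HasDerivAt (fun x : ℝ => x/2) (1/2) τ := (hasDerivAt_id τ).div_const 2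
  have key : HasDerivAt (fun x : ℝ => (x/2) ^ r / D)
      ((r * (τ/2) ^ (r - 1) * (1/2)) / D) τ := by
    exact ((Real.hasDerivAt_rpow_const (x := τ/2) (p := r) (Or.inl h2.ne')).comp τ hdiv).div_const D
  have heq : bTerm q m =ᶠ[nhds τ] fun x => (x/2) ^ r / D := by
    filter_upwards [Ioi_mem_nhds hτ] with x hx
    exact bTerm_rpow m hx
  have := key.congr_of_eventuallyEq heq
  convert this using 1
  rotate_left 2
  rw [bTerm', bTerm_rpow m hτ]
  rw [Real.rpow_sub_one h2.ne']
  rw [hD, hr]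
  field_simp
  rfl
  rfl

lemma besselI_eq (q τ : ℝ) : besselI q τ = ∑' m, bTerm q m τ := rfl

lemma besselI_pos {q : ℝ} (hq : -(1/2) ≤ q) {τ : ℝ} (hτ : 0 < τ) :
    0 < besselI q τ := by
  rw [besselI_eq]
  apply Summable.tsum_pos (summable_bTerm hq hτ) (fun m => bTerm_nonneg hq m hτ) 0
  have h2 : (0:ℝ) < τ/2 := by linarith
  have hG : 0 < Real.Gamma ((0:ℕ) + q + 1) := vmf_gamma_pos hq 0
  unfold bTerm
  simp only [Nat.factorial_zero, Nat.cast_zero, Nat.cast_one, mul_zero, pow_zero, one_mul]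
  push_cast at hG ⊢
  positivity

-- helper: rpow bounded on interval
lemma rpow_le_add_of_mem {a b y c : ℝ} (ha : 0 < a) (hay : a ≤ y) (hyb : y ≤ b) :
    y ^ c ≤ a ^ c + b ^ c := by
  have hy : 0 < y := ha.trans_le hay
  have hb : 0 < b := hy.trans_le hyb
  rcases le_or_gt 0 c with hc | hc
  · have h1 : y ^ c ≤ b ^ c := Real.rpow_le_rpow hy.le hyb hc
    have h2 : (0:ℝ) ≤ a ^ c := (Real.rpow_pos_of_pos ha c).le
    linarith
  · have h1 : y ^ c ≤ a ^ c := by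
      rw [Real.rpow_def_of_pos hy, Real.rpow_def_of_pos ha]
      apply Real.exp_le_exp.mpr
      have hlog : Real.log a ≤ Real.log y := Real.log_le_log ha hay
      nlinarith
    have h2 : (0:ℝ) ≤ b ^ c := (Real.rpow_pos_of_pos hb c).le
    linarith

-- reindexing
lemma bTerm_reindex {q : ℝ} (hq : -(1/2) ≤ q) (n : ℕ) {τ : ℝ} (hτ : 0 < τ) :
    (2 * ((n+1 : ℕ) : ℝ)) / τ * bTerm q (n+1) τ = bTerm (q+1) n τ := by
  have h2 : (0:ℝ) < τ/2 := by linarith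
  rw [bTerm_rpow (n+1) hτ, bTerm_rpow n hτ]
  have harg : ((n+1 : ℕ) : ℝ) + q + 1 = (n:ℝ) + (q+1) + 1 := by push_cast; ring
  rw [harg]
  have hexp : (2*(n+1:ℕ) : ℝ) + q = ((2*n : ℝ) + (q+1)) + 1 := by push_cast; ring
  rw [hexp, Real.rpow_add_one h2.ne']
  have hfac : ((n+1 : ℕ).factorial : ℝ) = ((n+1 : ℕ) : ℝ) * (n.factorial : ℝ) := by
    rw [Nat.factorial_succ]; push_cast; ring
  rw [hfac]
  have hG : 0 < Real.Gamma ((n:ℝ) + (q+1) + 1) := by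
    have : (0:ℝ) ≤ (n:ℝ) := Nat.cast_nonneg n
    exact Real.Gamma_pos_of_pos (by linarith)
  have hfn : (0:ℝ) < (n.factorial : ℝ) := by positivity
  have hn1 : (0:ℝ) < ((n+1 : ℕ) : ℝ) := by positivity
  field_simp

lemma bTerm'_bound {q : ℝ} (hq : -(1/2) ≤ q) (m : ℕ) {τ y : ℝ} (hτ : 0 < τ)
    (hy1 : τ/2 < y) (hy2 : y < τ+1) :
    |bTerm' q m y| ≤ ((2+|q|) * ((τ/4) ^ (q-1) + ((τ+1)/2) ^ (q-1)) / (2 * Real.Gamma (q+1)))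
      * (((τ+1)^2) ^ m / m.factorial) := by
  have hy : 0 < y := by linarith
  have h2 : (0:ℝ) < y/2 := by linarith
  have hG := vmf_gamma_pos hq m
  have hGq : (0:ℝ) < Real.Gamma (q+1) := Real.Gamma_pos_of_pos (by linarith)
  have hGl := vmf_gamma_lb hq m
  have hf : (0:ℝ) < (m.factorial : ℝ) := by positivity
  have hsplit : (y/2 : ℝ) ^ q = (y/2) ^ (q-1) * (y/2) := by
    rw [Real.rpow_sub_one h2.ne']; field_simp
  have hE : bTerm' q m y = (((2*m : ℝ) + q) * ((y/2) ^ (2*m) * (y/2) ^ (q-1)))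
      / (2 * (m.factorial : ℝ) * Real.Gamma ((m:ℝ)+q+1)) := by
    unfold bTerm' bTerm
    rw [hsplit]
    field_simp
  rw [hE, abs_div, abs_mul]
  have hr1 : |(y/2 : ℝ) ^ (2*m) * (y/2) ^ (q-1)| = (y/2) ^ (2*m) * (y/2) ^ (q-1) := by
    apply abs_of_nonneg; positivity
  have hr2 : |2 * (m.factorial : ℝ) * Real.Gamma ((m:ℝ)+q+1)|
      = 2 * (m.factorial : ℝ) * Real.Gamma ((m:ℝ)+q+1) := by
    apply abs_of_nonneg; positivity
  rw [hr1, hr2]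
  have hnum1 : |(2*m : ℝ) + q| ≤ (2+|q|) * 2^m := by
    have h1 : |(2*m : ℝ) + q| ≤ 2*m + |q| := by
      calc |(2*m : ℝ) + q| ≤ |(2*m : ℝ)| + |q| := abs_add_le _ _
        _ = 2*m + |q| := by rw [abs_of_nonneg (by positivity)]
    have h2' : (m : ℝ) ≤ 2^m := by
      have := Nat.lt_two_pow_self (n := m)
      have : (m:ℝ) < (2:ℝ)^m := by exact_mod_cast this
      linarith
    have h3 : (1:ℝ) ≤ 2^m := one_le_pow₀ (by norm_num)
    nlinarith [abs_nonneg q]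
  have hpow : (y/2 : ℝ) ^ (2*m) ≤ ((τ+1)/2) ^ (2*m) :=
    pow_le_pow_left₀ h2.le (by linarith) _
  have hrpow : (y/2 : ℝ) ^ (q-1) ≤ (τ/4) ^ (q-1) + ((τ+1)/2) ^ (q-1) :=
    rpow_le_add_of_mem (by linarith) (by linarith) (by linarith)
  have hM : (0:ℝ) < (τ/4) ^ (q-1) + ((τ+1)/2) ^ (q-1) := by
    have := Real.rpow_pos_of_pos (show (0:ℝ) < τ/4 by linarith) (q-1)
    have := Real.rpow_pos_of_pos (show (0:ℝ) < (τ+1)/2 by linarith) (q-1)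
    linarith
  calc |(2*m : ℝ) + q| * ((y/2) ^ (2*m) * (y/2) ^ (q-1))
        / (2 * (m.factorial : ℝ) * Real.Gamma ((m:ℝ)+q+1))
      ≤ ((2+|q|) * 2^m) * (((τ+1)/2) ^ (2*m) * ((τ/4) ^ (q-1) + ((τ+1)/2) ^ (q-1)))
        / (2 * (m.factorial : ℝ) * (Real.Gamma (q+1) * (1/2)^m)) := by
        apply div_le_div₀ (by positivity)
        · apply mul_le_mul hnum1 _ (by positivity) (by positivity)
          apply mul_le_mul hpow (le_trans hrpow (le_refl _)) (by positivity) (by positivity)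
        · positivity
        · have : Real.Gamma (q+1) * (1/2)^m ≤ Real.Gamma ((m:ℝ)+q+1) := hGl
          nlinarith
    _ = ((2+|q|) * ((τ/4) ^ (q-1) + ((τ+1)/2) ^ (q-1)) / (2 * Real.Gamma (q+1)))
        * (((τ+1)^2) ^ m / m.factorial) := by
        rw [pow_mul]
        have h1 : (((τ+1)/2 : ℝ))^2 = (τ+1)^2/4 := by ring
        rw [h1, div_pow]
        have h2' : ((1/2 : ℝ))^m = 1/2^m := by rw [div_pow]; norm_num
        have h4 : ((4:ℝ))^m = 2^m * 2^m := by rw [← mul_pow]; norm_num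
        rw [h2', h4]
        have hp2 : (0:ℝ) < (2:ℝ)^m := by positivity
        field_simp

lemma summable_bTerm' {q : ℝ} (hq : -(1/2) ≤ q) {τ : ℝ} (hτ : 0 < τ) :
    Summable (fun m : ℕ => (2*(m:ℝ))/τ * bTerm q m τ) := by
  have hq1 : -(1/2) ≤ q + 1 := by linarith
  apply (summable_nat_add_iff 1).mp
  apply Summable.congr (summable_bTerm hq1 hτ)
  intro n
  have := bTerm_reindex hq n hτ
  push_cast at this ⊢
  linarith [this]

lemma hasDerivAt_besselI {q : ℝ} (hq : -(1/2) ≤ q) {τ : ℝ} (hτ : 0 < τ) :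
    HasDerivAt (besselI q) (besselI (q+1) τ + q/τ * besselI q τ) τ := by
  have hq1 : -(1/2) ≤ q + 1 := by linarith
  have hmem : τ ∈ Ioo (τ/2) (τ+1) := ⟨by linarith, by linarith⟩
  have main : HasDerivAt (fun z => ∑' n, bTerm q n z) (∑' n, bTerm' q n τ) τ := by
    apply hasDerivAt_tsum_of_isPreconnected
      ((Real.summable_pow_div_factorial ((τ+1)^2)).mul_left
        ((2+|q|) * ((τ/4) ^ (q-1) + ((τ+1)/2) ^ (q-1)) / (2 * Real.Gamma (q+1))))
      isOpen_Ioo isPreconnected_Ioo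
      (fun m y hy => hasDerivAt_bTerm m (by have := hy.1; linarith : (0:ℝ) < y))
      (fun m y hy => bTerm'_bound hq m hτ hy.1 hy.2) hmem (summable_bTerm hq hτ) hmem
  have hs1 := summable_bTerm' hq hτ
  have hs2 : Summable (fun m => q/τ * bTerm q m τ) := (summable_bTerm hq hτ).mul_left _
  have hsum1 : ∑' m : ℕ, (2*(m:ℝ))/τ * bTerm q m τ = besselI (q+1) τ := by
    rw [hs1.tsum_eq_zero_add]
    simp only [Nat.cast_zero, mul_zero, zero_div, zero_mul, zero_add]
    rw [besselI_eq]
    apply tsum_congr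
    intro n
    have := bTerm_reindex hq n hτ
    push_cast at this ⊢
    linarith [this]
  have hval : ∑' m, bTerm' q m τ = besselI (q+1) τ + q/τ * besselI q τ := by
    calc ∑' m, bTerm' q m τ
        = ∑' m : ℕ, ((2*(m:ℝ))/τ * bTerm q m τ + q/τ * bTerm q m τ) := by
          apply tsum_congr; intro m; unfold bTerm'; ring
      _ = (∑' m : ℕ, (2*(m:ℝ))/τ * bTerm q m τ) + ∑' m, q/τ * bTerm q m τ := hs1.tsum_add hs2
      _ = besselI (q+1) τ + q/τ * besselI q τ := by
          rw [hsum1, tsum_mul_left, ← besselI_eq]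
  rw [← hval]
  exact main


/-- The function `c_k` is strictly decreasing on `(0, ∞)`; indeed its
derivative satisfies `c_k'(τ) = −(I_{k/2}(τ)/I_{k/2−1}(τ)) · c_k(τ) < 0`. -/
theorem vmfConst_strictAnti (k : ℕ) (hk : 1 ≤ k) :
    (∀ τ ∈ Ioi (0 : ℝ),
      HasDerivAt (vmfConst k)
        (-(besselI ((k : ℝ) / 2) τ / besselI ((k : ℝ) / 2 - 1) τ) * vmfConst k τ) τ ∧
      -(besselI ((k : ℝ) / 2) τ / besselI ((k : ℝ) / 2 - 1) τ) * vmfConst k τ < 0) ∧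
    StrictAntiOn (vmfConst k) (Ioi (0 : ℝ)) := by
  have hk1 : (1:ℝ) ≤ (k:ℝ) := by exact_mod_cast hk
  have hs : -(1/2 : ℝ) ≤ (k:ℝ)/2 - 1 := by linarith
  have hpart : ∀ τ ∈ Ioi (0 : ℝ),
      HasDerivAt (vmfConst k)
        (-(besselI ((k : ℝ) / 2) τ / besselI ((k : ℝ) / 2 - 1) τ) * vmfConst k τ) τ ∧
      -(besselI ((k : ℝ) / 2) τ / besselI ((k : ℝ) / 2 - 1) τ) * vmfConst k τ < 0 := by
    intro τ hτ
    rw [mem_Ioi] at hτ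
    have hI : 0 < besselI ((k:ℝ)/2 - 1) τ := besselI_pos hs hτ
    have hI' : 0 < besselI ((k:ℝ)/2) τ := by
      have := besselI_pos (q := (k:ℝ)/2) (by linarith) hτ
      exact this
    have h2π : (0:ℝ) < 2 * π := by positivity
    have hC : 0 < (2*π) ^ ((k:ℝ)/2) := Real.rpow_pos_of_pos h2π _
    have hvpos : 0 < vmfConst k τ := by
      unfold vmfConst
      exact div_pos (Real.rpow_pos_of_pos hτ _) (mul_pos hC hI)
    have hd : HasDerivAt (besselI ((k:ℝ)/2 - 1))
        (besselI ((k:ℝ)/2) τ + ((k:ℝ)/2 - 1)/τ * besselI ((k:ℝ)/2 - 1) τ) τ := by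
      have h := hasDerivAt_besselI hs hτ
      convert h using 3
      ring
    have num : HasDerivAt (fun x : ℝ => x ^ ((k:ℝ)/2 - 1))
        (((k:ℝ)/2 - 1) * τ ^ ((k:ℝ)/2 - 1 - 1)) τ :=
      Real.hasDerivAt_rpow_const (Or.inl hτ.ne')
    have den : HasDerivAt (fun x : ℝ => (2*π) ^ ((k:ℝ)/2) * besselI ((k:ℝ)/2 - 1) x)
        ((2*π) ^ ((k:ℝ)/2) *
          (besselI ((k:ℝ)/2) τ + ((k:ℝ)/2 - 1)/τ * besselI ((k:ℝ)/2 - 1) τ)) τ :=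
      hd.const_mul _
    have hden_ne : (2*π) ^ ((k:ℝ)/2) * besselI ((k:ℝ)/2 - 1) τ ≠ 0 :=
      (mul_pos hC hI).ne'
    have hquot := num.div den hden_ne
    have hderiv : HasDerivAt (vmfConst k)
        (-(besselI ((k : ℝ) / 2) τ / besselI ((k : ℝ) / 2 - 1) τ) * vmfConst k τ) τ := by
      convert hquot using 1
      rotate_left 3
      unfold vmfConst
      have hts : τ ^ ((k:ℝ)/2 - 1) = τ ^ ((k:ℝ)/2 - 1 - 1) * τ := by
        rw [← Real.rpow_add_one hτ.ne']
        congr 1; ring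
      set A := besselI ((k:ℝ)/2 - 1) τ with hA
      set B := besselI ((k:ℝ)/2) τ with hB
      set C := (2*π) ^ ((k:ℝ)/2) with hCdef
      set P := τ ^ ((k:ℝ)/2 - 1 - 1) with hP
      rw [hts]
      field_simp
      ring
      rfl
      rfl
      rfl
    refine ⟨hderiv, ?_⟩
    have : 0 < besselI ((k : ℝ) / 2) τ / besselI ((k : ℝ) / 2 - 1) τ * vmfConst k τ :=
      mul_pos (div_pos hI' hI) hvpos
    linarith
  refine ⟨hpart, ?_⟩
  apply strictAntiOn_of_deriv_neg (convex_Ioi 0)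
  · intro x hx
    exact ((hpart x hx).1.differentiableAt.continuousAt).continuousWithinAt
  · intro x hx
    rw [interior_Ioi] at hx
    rw [(hpart x hx).1.deriv]
    exact (hpart x hx).2
end

section
/- With the Fisher information matrix J_{θ₀} of the multinomial model (as above) and the empirical distribution P_Y of n i.i.d. samples, the statistic ‖J_{θ₀}^{1/2} √n (P_Y − P_{θ₀})‖² (restricted to the first k = m−1 coordinates) equals n · χ²(P_Y ‖ P_{θ₀}) = n · Σ_{i=1}^{m} (p_Y^{(i)} − p_{θ₀}^{(i)})² / p_{θ₀}^{(i)}, i.e. it equals Pearson's chi-squared statistic. -/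
open Real Matrix

/-- With the multinomial Fisher information matrix `J` at `P_{θ₀}` and any
square root `S` of `J` (`Sᵀ S = J`), the statistic `‖S √n (P_Y − P_{θ₀})‖²` (on the first `k`
coordinates) equals Pearson's chi-squared statistic `n · ∑ᵢ (p_Y^{(i)} − p_{θ₀}^{(i)})² / p_{θ₀}^{(i)}`. -/
theorem pearson_chi_square_statistic
    (k n : ℕ) (p q : Fin (k + 1) → ℝ)
    (hp : ∀ y, 0 < p y) (hps : ∑ y, p y = 1) (hqs : ∑ y, q y = 1)
    (J : Matrix (Fin k) (Fin k) ℝ)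
    (hJ : ∀ i j, J i j =
      if i = j then 1 / p i.castSucc + 1 / p (Fin.last k) else 1 / p (Fin.last k))
    (S : Matrix (Fin k) (Fin k) ℝ) (hS : Sᵀ * S = J)
    (v : Fin k → ℝ)
    (hv : v = fun i => Real.sqrt n * (q i.castSucc - p i.castSucc)) :
    ‖(WithLp.equiv 2 (Fin k → ℝ)).symm (S.mulVec v)‖ ^ 2
      = n * ∑ y : Fin (k + 1), (q y - p y) ^ 2 / p y := by
  have hn : (Real.sqrt n) ^ 2 = (n : ℝ) := Real.sq_sqrt (Nat.cast_nonneg n)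
  -- step 1: norm² = v ⬝ J v
  have h1 : ‖(WithLp.equiv 2 (Fin k → ℝ)).symm (S.mulVec v)‖ ^ 2 = v ⬝ᵥ J.mulVec v := by
    rw [EuclideanSpace.norm_eq, Real.sq_sqrt (by positivity), ← hS]
    simp only [WithLp.equiv_symm_apply, PiLp.toLp_apply, Real.norm_eq_abs, sq_abs]
    rw [← Matrix.mulVec_mulVec, Matrix.dotProduct_mulVec, Matrix.vecMul_transpose]
    simp [dotProduct, sq]
  -- total sum of v
  have hT : ∑ l, v l = Real.sqrt n * (p (Fin.last k) - q (Fin.last k)) := by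
    rw [hv, ← Finset.mul_sum, Finset.sum_sub_distrib]
    have hq' : ∑ i : Fin k, q i.castSucc = 1 - q (Fin.last k) := by
      rw [Fin.sum_univ_castSucc] at hqs; linarith
    have hp' : ∑ i : Fin k, p i.castSucc = 1 - p (Fin.last k) := by
      rw [Fin.sum_univ_castSucc] at hps; linarith
    rw [hq', hp']; ring
  -- inner sum
  have hrow : ∀ j, (J.mulVec v) j
      = v j / p j.castSucc + (Real.sqrt n * (p (Fin.last k) - q (Fin.last k))) / p (Fin.last k) := by
    intro j
    have : ∀ l, J j l * v l = (if j = l then v l / p j.castSucc else 0) + v l / p (Fin.last k) := by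
      intro l
      rw [hJ]
      by_cases h : j = l
      · subst h; simp; ring
      · simp [h]; ring
    simp only [Matrix.mulVec, dotProduct, this, Finset.sum_add_distrib,
      Finset.sum_ite_eq, Finset.mem_univ, if_true]
    rw [← Finset.sum_div, hT]
  have h2 : v ⬝ᵥ J.mulVec v
      = ∑ j : Fin k, (v j * v j / p j.castSucc)
        + (Real.sqrt n * (p (Fin.last k) - q (Fin.last k)))
          * (Real.sqrt n * (p (Fin.last k) - q (Fin.last k))) / p (Fin.last k) := by
    simp only [dotProduct, hrow, mul_add, Finset.sum_add_distrib]
    congr 1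
    · exact Finset.sum_congr rfl fun j _ => by ring
    · rw [← Finset.sum_mul, hT]; ring
  rw [h1, h2]
  rw [Fin.sum_univ_castSucc (f := fun y => (q y - p y) ^ 2 / p y), mul_add, Finset.mul_sum]
  congr 1
  · refine Finset.sum_congr rfl fun j _ => ?_
    rw [hv]
    have h := (hp j.castSucc).ne'
    field_simp
    nlinarith [hn]
  · have h := (hp (Fin.last k)).ne'
    field_simp
    nlinarith [hn, sq_nonneg (p (Fin.last k) - q (Fin.last k))]
end
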